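/- Let $\gamma > 0$, $0 < \eta < \tfrac{1}{2}(1 - 2^{-\gamma})$, and let $\{b_k\}_{k\ge 0}$ be a bounded nonnegative sequence. If $\{x_k\}_{k\ge 0}$ is a bounded nonnegative sequence satisfying $x_k \le b_k + \eta \sum_{l=0}^{\infty} 2^{-\gamma |k-l|} x_l$ for all $k \ge 0$, then there exists $r = r(\eta) \in (2^{-\gamma}, 1)$ and a constant $C$ such that $x_k \le C \sum_{l=0}^{\infty} r^{|k-l|} b_l$ for all $k \ge 0$. -/

import Mathlib

open scoped BigOperators

private lemma absDiff' (k l : ℕ) : |(k:ℝ) - (l:ℝ)| = ((((k:ℤ) - l).natAbs : ℕ) : ℝ) := by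
  rw [Nat.cast_natAbs]
  push_cast
  ring_nf

private lemma summable_pow_natAbs (c : ℝ) (hc0 : 0 < c) (hc1 : c < 1) (k : ℕ) :
    Summable (fun l : ℕ => c ^ ((k:ℤ) - l).natAbs) := by
  apply Summable.of_nonneg_of_le (fun l => by positivity) (fun l => ?_)
    ((summable_geometric_of_lt_one hc0.le hc1).mul_left (c ^ k)⁻¹)
  calc c ^ ((k:ℤ) - l).natAbs ≤ c ^ (l - k) := by
        apply pow_le_pow_of_le_one hc0.le hc1.le
        omega
    _ ≤ (c ^ k)⁻¹ * c ^ l := by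
        rw [inv_mul_eq_div, le_div_iff₀ (by positivity), ← pow_add]
        exact pow_le_pow_of_le_one hc0.le hc1.le (by omega)

private lemma tsum_pow_natAbs_le (c : ℝ) (hc0 : 0 < c) (hc1 : c < 1) (k : ℕ) :
    ∑' l : ℕ, c ^ ((k:ℤ) - l).natAbs ≤ 2 * (1 - c)⁻¹ := by
  have hs := summable_pow_natAbs c hc0 hc1 k
  have hgeo : Summable (fun i : ℕ => c ^ i) := summable_geometric_of_lt_one hc0.le hc1
  rw [← Summable.sum_add_tsum_nat_add k hs]
  have htail : (∑' i : ℕ, c ^ ((k:ℤ) - ((i + k : ℕ) : ℤ)).natAbs) = (1 - c)⁻¹ := by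
    rw [tsum_congr (fun i => by congr 1; push_cast; omega :
        ∀ i : ℕ, c ^ ((k:ℤ) - ((i + k : ℕ) : ℤ)).natAbs = c ^ i),
      tsum_geometric_of_lt_one hc0.le hc1]
  have hfin : (∑ i ∈ Finset.range k, c ^ ((k:ℤ) - i).natAbs) ≤ (1 - c)⁻¹ := by
    have e1 : ∀ i ∈ Finset.range k, c ^ ((k:ℤ) - i).natAbs = c ^ (k - i) := by
      intro i hi; congr 1; simp at hi; omega
    rw [Finset.sum_congr rfl e1, ← Finset.sum_range_reflect]
    calc ∑ j ∈ Finset.range k, c ^ (k - (k - 1 - j)) ≤ ∑ j ∈ Finset.range k, c ^ j := by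
          apply Finset.sum_le_sum
          intro j hj; simp at hj
          exact pow_le_pow_of_le_one hc0.le hc1.le (by omega)
      _ ≤ ∑' j : ℕ, c ^ j := Summable.sum_le_tsum _ (fun j _ => by positivity) hgeo
      _ = (1 - c)⁻¹ := tsum_geometric_of_lt_one hc0.le hc1
  linarith [htail, hfin]

private lemma summable_ker_mul (c : ℝ) (hc0 : 0 < c) (hc1 : c < 1)
    (u : ℕ → ℝ) (M : ℝ) (hu0 : ∀ l, 0 ≤ u l) (huM : ∀ l, u l ≤ M) (k : ℕ) :
    Summable (fun l : ℕ => c ^ ((k:ℤ) - l).natAbs * u l) :=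
  Summable.of_nonneg_of_le (fun l => mul_nonneg (by positivity) (hu0 l))
    (fun l => mul_le_mul_of_nonneg_left (huM l) (by positivity))
    ((summable_pow_natAbs c hc0 hc1 k).mul_right M)

namespace DiscreteGronwall

/-- **Discrete Gronwall inequality.**  Let `γ > 0`, `0 < η < (1 - 2⁻ᵞ)/2`, and let
`b` be a bounded nonnegative sequence.  If `x` is a bounded nonnegative sequence
satisfying `x k ≤ b k + η * ∑' l, 2^(-γ|k-l|) * x l` for all `k`, then there is
`r = r(η) ∈ (2⁻ᵞ, 1)` and a constant `C` such that
`x k ≤ C * ∑' l, r^(|k-l|) * b l` for all `k`. -/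
theorem discrete_gronwall
    (γ η : ℝ) (hγ : 0 < γ) (hη₀ : 0 < η) (hη : η < (1 - (2 : ℝ) ^ (-γ)) / 2)
    (b x : ℕ → ℝ)
    (hb0 : ∀ k, 0 ≤ b k) (hbB : ∃ M, ∀ k, b k ≤ M)
    (hx0 : ∀ k, 0 ≤ x k) (hxB : ∃ M, ∀ k, x k ≤ M)
    (hrec : ∀ k, x k ≤ b k + η * ∑' l : ℕ, (2 : ℝ) ^ (-(γ * |(k : ℝ) - (l : ℝ)|)) * x l) :
    ∃ r : ℝ, (2 : ℝ) ^ (-γ) < r ∧ r < 1 ∧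
      ∃ C : ℝ, 0 < C ∧ ∀ k, x k ≤ C * ∑' l : ℕ, r ^ |(k : ℝ) - (l : ℝ)| * b l := by
  obtain ⟨M, hM⟩ := hbB
  have hM0 : 0 ≤ M := (hb0 0).trans (hM 0)
  obtain ⟨N, hN⟩ := hxB
  obtain ⟨ρ, hρdef⟩ : ∃ ρ : ℝ, ρ = (2:ℝ) ^ (-γ) := ⟨_, rfl⟩
  rw [← hρdef] at hη
  have hρ0 : 0 < ρ := hρdef ▸ Real.rpow_pos_of_pos two_pos _
  have hρ1 : ρ < 1 := hρdef ▸ Real.rpow_lt_one_of_one_lt_of_neg one_lt_two (by linarith)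
  have h2η : 2 * η < 1 - ρ := by linarith
  have h12η : 0 < 1 - 2*η := by linarith
  obtain ⟨r, hrdef⟩ : ∃ r : ℝ, r = (ρ / (1 - 2*η) + 1) / 2 := ⟨_, rfl⟩
  have hq1 : ρ / (1 - 2*η) < 1 := (div_lt_one h12η).2 (by linarith)
  have hq2 : ρ < ρ / (1 - 2*η) := by
    rw [lt_div_iff₀ h12η]; nlinarith
  have hρr : ρ < r := by rw [hrdef]; linarith
  have hr1 : r < 1 := by rw [hrdef]; linarith
  have hr0 : 0 < r := hρ0.trans hρr
  have hq3 : ρ / (1 - 2*η) < r := by rw [hrdef]; linarith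
  obtain ⟨s, hsdef⟩ : ∃ s : ℝ, s = ρ / r := ⟨_, rfl⟩
  have hs0 : 0 < s := hsdef ▸ div_pos hρ0 hr0
  have hs1 : s < 1 - 2*η := by
    rw [hsdef, div_lt_iff₀ hr0]
    have h1 : (1 - 2*η) * (ρ/(1-2*η)) = ρ := by field_simp
    nlinarith [mul_lt_mul_of_pos_left hq3 h12η]
  have hs1' : s < 1 := by linarith
  -- kernel conversions
  have hkerρ : ∀ k l : ℕ, (2:ℝ) ^ (-(γ * |(k:ℝ) - (l:ℝ)|)) = ρ ^ ((k:ℤ) - l).natAbs := by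
    intro k l
    rw [← Real.rpow_natCast ρ ((k:ℤ) - l).natAbs, hρdef,
      ← Real.rpow_mul (by norm_num : (0:ℝ) ≤ 2)]
    congr 1
    rw [absDiff']
    ring
  have hkerr : ∀ k l : ℕ, r ^ |(k:ℝ) - (l:ℝ)| = r ^ ((k:ℤ) - l).natAbs := by
    intro k l
    rw [absDiff', Real.rpow_natCast]
  -- the comparison sequence y
  obtain ⟨y, hydef⟩ : ∃ y : ℕ → ℝ, y = fun k : ℕ => ∑' m : ℕ, r ^ ((k:ℤ) - m).natAbs * b m := ⟨_, rfl⟩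
  have hysum : ∀ k : ℕ, Summable (fun m : ℕ => r ^ ((k:ℤ) - m).natAbs * b m) :=
    fun k => summable_ker_mul r hr0 hr1 b M hb0 hM k
  have hy0 : ∀ k, 0 ≤ y k := by
    intro k; simp only [hydef]
    exact tsum_nonneg (fun m => mul_nonneg (by positivity) (hb0 m))
  have hyM : ∀ k, y k ≤ 2*(1-r)⁻¹ * M := by
    intro k
    simp only [hydef]
    calc (∑' m : ℕ, r ^ ((k:ℤ) - m).natAbs * b m) ≤ ∑' m : ℕ, r ^ ((k:ℤ) - m).natAbs * M :=
          Summable.tsum_le_tsum (fun m => mul_le_mul_of_nonneg_left (hM m) (by positivity))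
            (hysum k) ((summable_pow_natAbs r hr0 hr1 k).mul_right M)
      _ = (∑' m : ℕ, r ^ ((k:ℤ) - m).natAbs) * M := tsum_mul_right
      _ ≤ 2*(1-r)⁻¹ * M :=
          mul_le_mul_of_nonneg_right (tsum_pow_natAbs_le r hr0 hr1 k) hM0
  have hby : ∀ k, b k ≤ y k := by
    intro k
    have h := Summable.le_tsum (hysum k) k (fun j _ => mul_nonneg (by positivity) (hb0 j))
    simp only [hydef]
    simpa using h
  -- pointwise convolution bound
  have hpt : ∀ k l m : ℕ, ρ ^ ((k:ℤ)-l).natAbs * r ^ ((l:ℤ)-m).natAbs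
      ≤ s ^ ((k:ℤ)-l).natAbs * r ^ ((k:ℤ)-m).natAbs := by
    intro k l m
    have hρeq : ρ ^ ((k:ℤ)-l).natAbs = s ^ ((k:ℤ)-l).natAbs * r ^ ((k:ℤ)-l).natAbs := by
      rw [hsdef, div_pow, div_mul_cancel₀]
      positivity
    rw [hρeq, mul_assoc, ← pow_add]
    have htri : ((k:ℤ)-m).natAbs ≤ ((k:ℤ)-l).natAbs + ((l:ℤ)-m).natAbs := by omega
    exact mul_le_mul_of_nonneg_left (pow_le_pow_of_le_one hr0.le hr1.le htri) (by positivity)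
  -- convolution estimate
  have hconv : ∀ k : ℕ, (∑' l : ℕ, ρ ^ ((k:ℤ)-l).natAbs * y l) ≤ 2*(1-s)⁻¹ * y k := by
    intro k
    apply Summable.tsum_le_of_sum_le (summable_ker_mul ρ hρ0 hρ1 y (2*(1-r)⁻¹ * M) hy0 hyM k)
    intro t
    have e1 : ∀ l ∈ t, ρ ^ ((k:ℤ)-l).natAbs * y l
        = ∑' m : ℕ, ρ ^ ((k:ℤ)-l).natAbs * (r ^ ((l:ℤ)-m).natAbs * b m) := by
      intro l _
      simp only [hydef]
      exact (tsum_mul_left).symm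
    rw [Finset.sum_congr rfl e1,
      ← Summable.tsum_finsetSum (fun l _ => ((hysum l).mul_left (ρ ^ ((k:ℤ)-l).natAbs)))]
    have hsum1 : Summable (fun m : ℕ =>
        ∑ l ∈ t, ρ ^ ((k:ℤ)-l).natAbs * (r ^ ((l:ℤ)-m).natAbs * b m)) :=
      summable_sum (fun l _ => (hysum l).mul_left (ρ ^ ((k:ℤ)-l).natAbs))
    calc (∑' m : ℕ, ∑ l ∈ t, ρ ^ ((k:ℤ)-l).natAbs * (r ^ ((l:ℤ)-m).natAbs * b m))
        ≤ ∑' m : ℕ, 2*(1-s)⁻¹ * (r ^ ((k:ℤ)-m).natAbs * b m) := by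
          apply Summable.tsum_le_tsum _ hsum1 ((hysum k).mul_left (2*(1-s)⁻¹))
          intro m
          have h1 : (∑ l ∈ t, ρ ^ ((k:ℤ)-l).natAbs * r ^ ((l:ℤ)-m).natAbs)
              ≤ 2*(1-s)⁻¹ * r ^ ((k:ℤ)-m).natAbs := by
            calc (∑ l ∈ t, ρ ^ ((k:ℤ)-l).natAbs * r ^ ((l:ℤ)-m).natAbs)
                ≤ ∑ l ∈ t, s ^ ((k:ℤ)-l).natAbs * r ^ ((k:ℤ)-m).natAbs :=
                  Finset.sum_le_sum (fun l _ => hpt k l m)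
              _ = (∑ l ∈ t, s ^ ((k:ℤ)-l).natAbs) * r ^ ((k:ℤ)-m).natAbs :=
                  (Finset.sum_mul _ _ _).symm
              _ ≤ 2*(1-s)⁻¹ * r ^ ((k:ℤ)-m).natAbs := by
                  apply mul_le_mul_of_nonneg_right _ (by positivity)
                  exact (Summable.sum_le_tsum t (fun l _ => by positivity)
                    (summable_pow_natAbs s hs0 hs1' k)).trans (tsum_pow_natAbs_le s hs0 hs1' k)
          calc (∑ l ∈ t, ρ ^ ((k:ℤ)-l).natAbs * (r ^ ((l:ℤ)-m).natAbs * b m))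
              = (∑ l ∈ t, ρ ^ ((k:ℤ)-l).natAbs * r ^ ((l:ℤ)-m).natAbs) * b m := by
                rw [Finset.sum_mul]
                exact Finset.sum_congr rfl fun l _ => (mul_assoc _ _ _).symm
            _ ≤ (2*(1-s)⁻¹ * r ^ ((k:ℤ)-m).natAbs) * b m :=
                mul_le_mul_of_nonneg_right h1 (hb0 m)
            _ = 2*(1-s)⁻¹ * (r ^ ((k:ℤ)-m).natAbs * b m) := by ring
      _ = 2*(1-s)⁻¹ * y k := by simp only [hydef]; rw [tsum_mul_left]
  -- the constant C and the supremum S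
  obtain ⟨C, hCdef⟩ : ∃ C : ℝ, C = (1 - η*(2*(1-s)⁻¹))⁻¹ := ⟨_, rfl⟩
  have hq' : η*(2*(1-s)⁻¹) < 1 := by
    have h1s : 0 < 1 - s := by linarith
    have h2 : 2*η/(1-s) < 1 := (div_lt_one h1s).2 (by linarith)
    calc η*(2*(1-s)⁻¹) = 2*η/(1-s) := by ring
      _ < 1 := h2
  have hq'0 : 0 < η*(2*(1-s)⁻¹) := by
    have h1s : 0 < 1 - s := by linarith
    positivity
  have hC0 : 0 < C := by rw [hCdef]; exact inv_pos.2 (by linarith)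
  have hCeq : C * (1 - η*(2*(1-s)⁻¹)) = 1 := hCdef ▸ inv_mul_cancel₀ (by linarith)
  have hbdd : BddAbove (Set.range fun k => x k - C * y k) := by
    refine ⟨N, ?_⟩
    rintro _ ⟨k, rfl⟩
    have h1 : 0 ≤ C * y k := mul_nonneg hC0.le (hy0 k)
    have h2 := hN k
    show x k - C * y k ≤ N
    linarith
  obtain ⟨S, hSdef⟩ : ∃ S : ℝ, S = ⨆ k, (x k - C * y k) := ⟨_, rfl⟩
  have hSle : ∀ k, x k - C * y k ≤ S := fun k => by rw [hSdef]; exact le_ciSup hbdd k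
  -- key estimate
  have hkey : ∀ k, x k - C * y k ≤ (η*(2*(1-ρ)⁻¹)) * max S 0 := by
    intro k
    have hsum_x : Summable (fun l : ℕ => ρ ^ ((k:ℤ)-l).natAbs * x l) :=
      summable_ker_mul ρ hρ0 hρ1 x N hx0 hN k
    have hsum_y : Summable (fun l : ℕ => ρ ^ ((k:ℤ)-l).natAbs * y l) :=
      summable_ker_mul ρ hρ0 hρ1 y _ hy0 hyM k
    have hsum_1 : Summable (fun l : ℕ => ρ ^ ((k:ℤ)-l).natAbs) :=
      summable_pow_natAbs ρ hρ0 hρ1 k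
    have hrec' : x k ≤ b k + η * ∑' l : ℕ, ρ ^ ((k:ℤ)-l).natAbs * x l := by
      have h := hrec k
      rwa [tsum_congr (fun l => by rw [hkerρ k l] :
        ∀ l : ℕ, (2:ℝ) ^ (-(γ * |(k:ℝ) - (l:ℝ)|)) * x l = ρ ^ ((k:ℤ)-l).natAbs * x l)] at h
    have step1 : (∑' l : ℕ, ρ ^ ((k:ℤ)-l).natAbs * x l)
        ≤ (∑' l : ℕ, ρ ^ ((k:ℤ)-l).natAbs) * S + C * (∑' l : ℕ, ρ ^ ((k:ℤ)-l).natAbs * y l) := by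
      have h1 : (∑' l : ℕ, ρ ^ ((k:ℤ)-l).natAbs * x l)
          ≤ ∑' l : ℕ, (ρ ^ ((k:ℤ)-l).natAbs * S + C * (ρ ^ ((k:ℤ)-l).natAbs * y l)) := by
        apply Summable.tsum_le_tsum _ hsum_x ((hsum_1.mul_right S).add (hsum_y.mul_left C))
        intro l
        have h2 : x l ≤ S + C * y l := by have := hSle l; linarith
        calc ρ ^ ((k:ℤ)-l).natAbs * x l ≤ ρ ^ ((k:ℤ)-l).natAbs * (S + C * y l) :=
              mul_le_mul_of_nonneg_left h2 (by positivity)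
          _ = ρ ^ ((k:ℤ)-l).natAbs * S + C * (ρ ^ ((k:ℤ)-l).natAbs * y l) := by ring
      rwa [Summable.tsum_add (hsum_1.mul_right S) (hsum_y.mul_left C), tsum_mul_right,
        tsum_mul_left] at h1
    have step2 : (∑' l : ℕ, ρ ^ ((k:ℤ)-l).natAbs) * S ≤ (2*(1-ρ)⁻¹) * max S 0 := by
      rcases le_or_gt 0 S with hS0 | hS0
      · calc (∑' l : ℕ, ρ ^ ((k:ℤ)-l).natAbs) * S ≤ (2*(1-ρ)⁻¹) * S :=
            mul_le_mul_of_nonneg_right (tsum_pow_natAbs_le ρ hρ0 hρ1 k) hS0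
          _ = (2*(1-ρ)⁻¹) * max S 0 := by rw [max_eq_left hS0]
      · have h1 : (∑' l : ℕ, ρ ^ ((k:ℤ)-l).natAbs) * S ≤ 0 :=
          mul_nonpos_of_nonneg_of_nonpos (tsum_nonneg fun l => by positivity) hS0.le
        rw [max_eq_right hS0.le, mul_zero]
        exact h1
    have step3 := mul_le_mul_of_nonneg_left (hconv k) hC0.le
    have hx' : x k ≤ b k + η * ((2*(1-ρ)⁻¹) * max S 0 + C * (2*(1-s)⁻¹ * y k)) := by
      have h3 : (∑' l : ℕ, ρ ^ ((k:ℤ)-l).natAbs * x l)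
          ≤ (2*(1-ρ)⁻¹) * max S 0 + C * (2*(1-s)⁻¹ * y k) := by linarith
      have h4 := mul_le_mul_of_nonneg_left h3 hη₀.le
      linarith [hrec']
    have hqq : η*(C*(2*(1-s)⁻¹ * y k)) = (C-1) * y k := by
      have h2 : C * (η*(2*(1-s)⁻¹)) = C - 1 := by nlinarith [hCeq]
      calc η*(C*(2*(1-s)⁻¹ * y k)) = (C * (η*(2*(1-s)⁻¹))) * y k := by ring
        _ = (C-1) * y k := by rw [h2]
    have hexp : η * ((2*(1-ρ)⁻¹) * max S 0 + C * (2*(1-s)⁻¹ * y k))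
        = (η*(2*(1-ρ)⁻¹)) * max S 0 + η*(C*(2*(1-s)⁻¹ * y k)) := by ring
    have hbk := hby k
    linarith [hx', hqq, hexp]
  -- conclude S ≤ 0
  have hqA : η*(2*(1-ρ)⁻¹) < 1 := by
    have h1ρ : 0 < 1 - ρ := by linarith
    have h2 : 2*η/(1-ρ) < 1 := (div_lt_one h1ρ).2 (by linarith)
    calc η*(2*(1-ρ)⁻¹) = 2*η/(1-ρ) := by ring
      _ < 1 := h2
  have hS0 : S ≤ 0 := by
    by_contra h
    push_neg at h
    have hmax : max S 0 = S := max_eq_left h.le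
    have h1 : S ≤ (η*(2*(1-ρ)⁻¹)) * max S 0 := by
      rw [hSdef] at h ⊢
      exact ciSup_le fun k => (hkey k).trans (by rw [← hSdef])
    rw [hmax] at h1
    have h2 : (η*(2*(1-ρ)⁻¹)) * S < 1 * S := mul_lt_mul_of_pos_right hqA h
    linarith
  refine ⟨r, by rw [← hρdef]; exact hρr, hr1, C, hC0, fun k => ?_⟩
  have h1 : x k ≤ C * y k := by have := hSle k; linarith
  calc x k ≤ C * y k := h1
    _ = C * ∑' l : ℕ, r ^ |(k:ℝ) - (l:ℝ)| * b l := by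
      congr 1
      simp only [hydef]
      exact (tsum_congr fun l => by rw [hkerr k l]).symm

end DiscreteGronwall
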